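/- If an encoding scheme is reliable, i.e., $W$ is $\overline{\mathbb{P}}$-a.s. measurable with respect to $\mathcal{F}^Y_{1:\infty}$, then for any prior $\nu \ll \bar{\nu}$, $\lim_{n\to\infty} \mathbb{E}_\nu[\|\psi_n - \bar{\psi}_n\|] = 0$, where $\psi_n$ and $\bar{\psi}_n$ are the posteriors of $W$ given $Y_{1:n}$ under priors $\nu$ and $\bar{\nu}$ respectively. -/

import Mathlib

open MeasureTheory ProbabilityTheory Filter Set
open scoped ENNReal NNReal

/-- Total variation distance `‖P - Q‖ = sup_A |P(A) - Q(A)|` (sup over measurable sets). -/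
noncomputable def tvDist {X : Type*} [MeasurableSpace X] (P Q : Measure X) : ℝ :=
  ⨆ A : {A : Set X // MeasurableSet A}, |(P A.1).toReal - (Q A.1).toReal|

lemma tvDist_nonneg {X : Type*} [MeasurableSpace X] (P Q : Measure X) : 0 ≤ tvDist P Q := by
  unfold tvDist
  by_cases h : BddAbove (Set.range fun A : {A : Set X // MeasurableSet A} =>
      |(P A.1).toReal - (Q A.1).toReal|)
  · refine le_trans ?_ (le_ciSup h ⟨∅, MeasurableSet.empty⟩)
    positivity
  · rw [Real.iSup_of_not_bddAbove h]

/-- Scheffé-type identity for the TV distance between `P.withDensity h` and `P`. -/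
lemma tvDist_withDensity {X : Type*} [MeasurableSpace X] (P : Measure X)
    [IsProbabilityMeasure P] (h : X → ℝ≥0∞) (hh : Measurable h)
    [hQ : IsProbabilityMeasure (P.withDensity h)] :
    tvDist (P.withDensity h) P
      = ((P.withDensity h) {w | 1 ≤ h w}).toReal - (P {w | 1 ≤ h w}).toReal := by
  set Q : Measure X := P.withDensity h with hQdef
  set A : Set X := {w | 1 ≤ h w} with hA
  have hAm : MeasurableSet A := hh measurableSet_Ici
  -- (i) below A-like sets grow, (ii) on Aᶜ-like sets shrink
  have hle : ∀ B : Set X, MeasurableSet B → B ⊆ A → P B ≤ Q B := by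
    intro B hB hBA
    rw [hQdef, withDensity_apply _ hB]
    calc P B = ∫⁻ w in B, 1 ∂P := by rw [setLIntegral_one]
    _ ≤ ∫⁻ w in B, h w ∂P := by
        refine setLIntegral_mono hh fun w hw => ?_
        exact hBA hw
  have hge : ∀ B : Set X, MeasurableSet B → B ⊆ Aᶜ → Q B ≤ P B := by
    intro B hB hBA
    rw [hQdef, withDensity_apply _ hB]
    calc ∫⁻ w in B, h w ∂P ≤ ∫⁻ w in B, 1 ∂P := by
          refine setLIntegral_mono measurable_const fun w hw => ?_
          exact le_of_not_ge (hBA hw)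
    _ = P B := setLIntegral_one _
  have key : ∀ B : Set X, MeasurableSet B →
      |(Q B).toReal - (P B).toReal| ≤ (Q A).toReal - (P A).toReal := by
    intro B hB
    have h1 : Q (B ∩ A) + Q (B \ A) = Q B := measure_inter_add_diff B hAm
    have h2 : P (B ∩ A) + P (B \ A) = P B := measure_inter_add_diff B hAm
    have h3 : Q (A ∩ B) + Q (A \ B) = Q A := measure_inter_add_diff A hB
    have h4 : P (A ∩ B) + P (A \ B) = P A := measure_inter_add_diff A hB
    have h5 : Q (Aᶜ ∩ B) + Q (Aᶜ \ B) = Q Aᶜ := measure_inter_add_diff Aᶜ hB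
    have h6 : P (Aᶜ ∩ B) + P (Aᶜ \ B) = P Aᶜ := measure_inter_add_diff Aᶜ hB
    have e1 : Q (B \ A) ≤ P (B \ A) := hge _ (hB.diff hAm) (diff_subset_compl _ _)
    have e2 : P (A \ B) ≤ Q (A \ B) := hle _ (hAm.diff hB) diff_subset
    have e3 : P (B ∩ A) ≤ Q (B ∩ A) := hle _ (hB.inter hAm) inter_subset_right
    have e4 : Q (Aᶜ \ B) ≤ P (Aᶜ \ B) := hge _ (hAm.compl.diff hB) diff_subset
    have e5 : Q (Aᶜ ∩ B) ≤ P (Aᶜ ∩ B) := hge _ (hAm.compl.inter hB) inter_subset_left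
    have hBA : B ∩ A = A ∩ B := inter_comm _ _
    have hBA' : B \ A = Aᶜ ∩ B := by rw [diff_eq, inter_comm]
    have hQc : (Q Aᶜ).toReal = 1 - (Q A).toReal := by
      rw [prob_compl_eq_one_sub hAm]
      rw [ENNReal.toReal_sub_of_le prob_le_one ENNReal.one_ne_top, ENNReal.toReal_one]
    have hPc : (P Aᶜ).toReal = 1 - (P A).toReal := by
      rw [prob_compl_eq_one_sub hAm]
      rw [ENNReal.toReal_sub_of_le prob_le_one ENNReal.one_ne_top, ENNReal.toReal_one]
    -- convert all to reals
    have f : ∀ (μ' : Measure X) (s : Set X), IsProbabilityMeasure μ' → μ' s ≠ ∞ :=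
      fun μ' s _ => measure_ne_top μ' s
    have tr : ∀ {a b : ℝ≥0∞}, a ≠ ∞ → b ≠ ∞ → a + b = (a + b) → True := fun _ _ _ => trivial
    rw [abs_le]
    constructor
    · -- -(Q A - P A) ≤ Q B - P B, i.e. P B - Q B ≤ Q A - P A
      have hQB : (Q B).toReal = (Q (B ∩ A)).toReal + (Q (B \ A)).toReal := by
        rw [← ENNReal.toReal_add (measure_ne_top _ _) (measure_ne_top _ _), h1]
      have hPB : (P B).toReal = (P (B ∩ A)).toReal + (P (B \ A)).toReal := by
        rw [← ENNReal.toReal_add (measure_ne_top _ _) (measure_ne_top _ _), h2]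
      have hQc' : (Q (Aᶜ ∩ B)).toReal + (Q (Aᶜ \ B)).toReal = (Q Aᶜ).toReal := by
        rw [← ENNReal.toReal_add (measure_ne_top _ _) (measure_ne_top _ _), h5]
      have hPc' : (P (Aᶜ ∩ B)).toReal + (P (Aᶜ \ B)).toReal = (P Aᶜ).toReal := by
        rw [← ENNReal.toReal_add (measure_ne_top _ _) (measure_ne_top _ _), h6]
      have r1 : (P (B ∩ A)).toReal ≤ (Q (B ∩ A)).toReal :=
        ENNReal.toReal_mono (measure_ne_top _ _) e3
      have r4 : (Q (Aᶜ \ B)).toReal ≤ (P (Aᶜ \ B)).toReal :=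
        ENNReal.toReal_mono (measure_ne_top _ _) e4
      have r5 : (Q (Aᶜ ∩ B)).toReal ≤ (P (Aᶜ ∩ B)).toReal :=
        ENNReal.toReal_mono (measure_ne_top _ _) e5
      have hBA'' : (Q (B \ A)).toReal = (Q (Aᶜ ∩ B)).toReal := by rw [hBA']
      have hBA''' : (P (B \ A)).toReal = (P (Aᶜ ∩ B)).toReal := by rw [hBA']
      -- P B - Q B = (P(B∩A)-Q(B∩A)) + (P(Aᶜ∩B) - Q(Aᶜ∩B)) ≤ 0 + (P Aᶜ - Q Aᶜ) = Q A - P A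
      nlinarith [hQc, hPc]
    · -- Q B - P B ≤ Q A - P A
      have hQB : (Q B).toReal = (Q (B ∩ A)).toReal + (Q (B \ A)).toReal := by
        rw [← ENNReal.toReal_add (measure_ne_top _ _) (measure_ne_top _ _), h1]
      have hPB : (P B).toReal = (P (B ∩ A)).toReal + (P (B \ A)).toReal := by
        rw [← ENNReal.toReal_add (measure_ne_top _ _) (measure_ne_top _ _), h2]
      have hQA : (Q A).toReal = (Q (A ∩ B)).toReal + (Q (A \ B)).toReal := by
        rw [← ENNReal.toReal_add (measure_ne_top _ _) (measure_ne_top _ _), h3]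
      have hPA : (P A).toReal = (P (A ∩ B)).toReal + (P (A \ B)).toReal := by
        rw [← ENNReal.toReal_add (measure_ne_top _ _) (measure_ne_top _ _), h4]
      have r1 : (Q (B \ A)).toReal ≤ (P (B \ A)).toReal :=
        ENNReal.toReal_mono (measure_ne_top _ _) e1
      have r2 : (P (A \ B)).toReal ≤ (Q (A \ B)).toReal :=
        ENNReal.toReal_mono (measure_ne_top _ _) e2
      have hBA'' : (Q (B ∩ A)).toReal = (Q (A ∩ B)).toReal := by rw [hBA]
      have hBA''' : (P (B ∩ A)).toReal = (P (A ∩ B)).toReal := by rw [hBA]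
      nlinarith
  have hval : |(Q A).toReal - (P A).toReal| = (Q A).toReal - (P A).toReal := by
    rw [abs_of_nonneg]
    have := hle A hAm (subset_refl A)
    have := ENNReal.toReal_mono (measure_ne_top Q A) this
    linarith
  refine le_antisymm ?_ ?_
  · exact ciSup_le fun B => key B.1 B.2
  · have hbdd : BddAbove (Set.range fun B : {B : Set X // MeasurableSet B} =>
        |(Q B.1).toReal - (P B.1).toReal|) := by
      refine ⟨(Q A).toReal - (P A).toReal, ?_⟩
      rintro x ⟨B, rfl⟩
      exact key B.1 B.2
    have := le_ciSup hbdd (⟨A, hAm⟩ : {B : Set X // MeasurableSet B})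
    rw [hval] at this
    exact this

lemma ennreal_sub_le_ofReal_abs {a b : ℝ≥0∞} (ha : a ≠ ∞) (hb : b ≠ ∞) :
    a - b ≤ ENNReal.ofReal |a.toReal - b.toReal| := by
  rcases le_total a b with hab | hab
  · simp [tsub_eq_zero_of_le hab]
  · have : (a - b).toReal = a.toReal - b.toReal := ENNReal.toReal_sub_of_le hab ha
    calc a - b = ENNReal.ofReal ((a - b).toReal) := by
          rw [ENNReal.ofReal_toReal]; exact (ENNReal.sub_ne_top ha)
    _ ≤ ENNReal.ofReal |a.toReal - b.toReal| := by
        rw [this]; exact ENNReal.ofReal_le_ofReal (le_abs_self _)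

/-- Main single-time-step estimate. -/
lemma step_bound {Ω 𝒲 β : Type*} {mΩ : MeasurableSpace Ω} [MeasurableSpace 𝒲]
    [StandardBorelSpace 𝒲] [Nonempty 𝒲] [MeasurableSpace β]
    (μbar : Measure Ω) [IsProbabilityMeasure μbar]
    (W : Ω → 𝒲) (hW : Measurable W) (X : Ω → β) (hX : Measurable X)
    (r : 𝒲 → ℝ≥0∞) (hr : Measurable r) (hrint : ∫⁻ ω, r (W ω) ∂μbar = 1)
    (μ : Measure Ω) [IsProbabilityMeasure μ]
    (hμ : μ = μbar.withDensity (fun ω => r (W ω))) :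
    ∫ ω, tvDist (condDistrib W X μ (X ω)) (condDistrib W X μbar (X ω)) ∂μ
      ≤ (∫⁻ ω, (‖(∫ w, (r w).toReal ∂(condDistrib W X μbar (X ω)))
          - (r (W ω)).toReal‖₊ : ℝ≥0∞) ∂μbar).toReal := by
  -- p: joint map, θ/θ': joint laws
  have hpm : Measurable (fun ω => (X ω, W ω)) := hX.prodMk hW
  set θ : Measure (β × 𝒲) := μbar.map (fun ω => (X ω, W ω)) with hθdef
  set θ' : Measure (β × 𝒲) := μ.map (fun ω => (X ω, W ω)) with hθ'def
  haveI : IsProbabilityMeasure θ := Measure.isProbabilityMeasure_map hpm.aemeasurable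
  haveI : IsProbabilityMeasure θ' := Measure.isProbabilityMeasure_map hpm.aemeasurable
  have h2 : Measurable (fun q : β × 𝒲 => r q.2) := hr.comp measurable_snd
  have hθθ' : θ' = θ.withDensity (fun q => r q.2) := by
    ext s hs
    rw [hθ'def, hμ, Measure.map_apply hpm hs, withDensity_apply _ (hpm hs),
      withDensity_apply _ hs, hθdef, setLIntegral_map hs h2 hpm]
  set κb := θ.condKernel with hκbdef
  set m : β → ℝ≥0∞ := fun x => ∫⁻ w, r w ∂(κb x) with hmdef
  have hm_meas : Measurable m :=
    Measurable.lintegral_kernel_prod_right (f := fun _ w => r w) h2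
  have hfst : θ.fst = μbar.map X := by rw [hθdef, Measure.fst_map_prodMk hW]
  have hfst' : θ'.fst = μ.map X := by rw [hθ'def, Measure.fst_map_prodMk hW]
  have hdis : θ.fst ⊗ₘ κb = θ := θ.disintegrate θ.condKernel
  have hm_int : ∫⁻ x, m x ∂θ.fst = 1 := by
    show ∫⁻ x, ∫⁻ w, (fun q : β × 𝒲 => r q.2) (x, w) ∂κb x ∂θ.fst = 1
    rw [← Measure.lintegral_compProd h2, hdis, hθdef, lintegral_map h2 hpm]
    exact hrint
  have hfst_wd : θ'.fst = θ.fst.withDensity m := by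
    ext s hs
    rw [Measure.fst_apply hs, hθθ', withDensity_apply _ (measurable_fst hs),
      withDensity_apply _ hs]
    have hpre : Prod.fst ⁻¹' s = s ×ˢ (univ : Set 𝒲) := by
      ext q; simp [Set.mem_prod]
    have hmain : ∫⁻ a in s ×ˢ (univ : Set 𝒲), r a.2 ∂θ = ∫⁻ x in s, m x ∂θ.fst := by
      conv_lhs => rw [← hdis]
      rw [Measure.setLIntegral_compProd h2 hs MeasurableSet.univ]
      refine setLIntegral_congr_fun hs (fun x _ => ?_)
      rw [Measure.restrict_univ]
    rw [hpre, hmain]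
  have hac' : θ'.fst ≪ θ.fst := by rw [hfst_wd]; exact withDensity_absolutelyContinuous _ _
  have hm_ne_top : ∀ᵐ x ∂θ.fst, m x ≠ ∞ := by
    filter_upwards [ae_lt_top hm_meas (by rw [hm_int]; exact ENNReal.one_ne_top)] with x hx
    exact hx.ne
  have hm_ne_top' : ∀ᵐ x ∂θ'.fst, m x ≠ ∞ := hac'.ae_le hm_ne_top
  have hm_ne_zero' : ∀ᵐ x ∂θ'.fst, m x ≠ 0 := by
    have hs0 : MeasurableSet {x | m x = 0} := hm_meas (measurableSet_singleton 0)
    have h0 : θ'.fst {x | m x = 0} = 0 := by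
      rw [hfst_wd, withDensity_apply _ hs0]
      calc ∫⁻ x in {x | m x = 0}, m x ∂θ.fst
          = ∫⁻ _ in {x | m x = 0}, 0 ∂θ.fst :=
            setLIntegral_congr_fun hs0 (fun x hx => hx)
      _ = 0 := lintegral_zero
    rw [ae_iff]
    simpa using h0
  -- the candidate kernel
  set S : Set β := {x | m x ≠ 0} ∩ {x | m x ≠ ∞} with hSdef
  have hSm : MeasurableSet S :=
    ((hm_meas (measurableSet_singleton 0)).compl).inter
      ((hm_meas (measurableSet_singleton ∞)).compl)
  have hκ1_meas : Measurable fun x => (κb x).withDensity (fun w => (m x)⁻¹ * r w) := by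
    refine Measure.measurable_of_measurable_coe _ fun B hB => ?_
    simp_rw [withDensity_apply _ hB]
    have : ∀ x, ∫⁻ w in B, (m x)⁻¹ * r w ∂κb x = (m x)⁻¹ * ∫⁻ w in B, r w ∂κb x :=
      fun x => lintegral_const_mul _ hr
    simp_rw [this]
    refine (hm_meas.inv).mul ?_
    have : ∀ x, ∫⁻ w in B, r w ∂κb x = ∫⁻ w, B.indicator r w ∂κb x := by
      intro x; rw [lintegral_indicator hB]
    simp_rw [this]
    exact Measurable.lintegral_kernel_prod_right (f := fun _ w => B.indicator r w)
      ((hr.indicator hB).comp measurable_snd)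
  set κ1 : Kernel β 𝒲 :=
    ⟨fun x => (κb x).withDensity (fun w => (m x)⁻¹ * r w), hκ1_meas⟩ with hκ1def
  have hκ1_apply : ∀ x, κ1 x = (κb x).withDensity (fun w => (m x)⁻¹ * r w) := fun _ => rfl
  set κc : Kernel β 𝒲 := Kernel.piecewise hSm κ1 κb with hκcdef
  haveI hκcMarkov : IsMarkovKernel κc := by
    refine ⟨fun x => ?_⟩
    rw [hκcdef, Kernel.piecewise_apply]
    split_ifs with hx
    · constructor
      rw [hκ1_apply, withDensity_apply _ MeasurableSet.univ, Measure.restrict_univ,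
        lintegral_const_mul _ hr]
      exact ENNReal.inv_mul_cancel hx.1 hx.2
    · infer_instance
  have hcomp : θ' = θ'.fst ⊗ₘ κc := by
    ext s hs
    rw [Measure.compProd_apply hs, hfst_wd,
      lintegral_withDensity_eq_lintegral_mul _ hm_meas
        (Kernel.measurable_kernel_prodMk_left hs)]
    have hLHS : θ' s = ∫⁻ x, ∫⁻ w in Prod.mk x ⁻¹' s, r w ∂κb x ∂θ.fst := by
      rw [hθθ', withDensity_apply _ hs]
      have : ∫⁻ a in s, r a.2 ∂θ = ∫⁻ a, s.indicator (fun q : β × 𝒲 => r q.2) a ∂θ := by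
        rw [lintegral_indicator hs]
      rw [this]
      conv_lhs => rw [← hdis]
      rw [Measure.lintegral_compProd (h2.indicator hs)]
      refine lintegral_congr fun x => ?_
      rw [← lintegral_indicator (measurable_prodMk_left hs)]
      refine lintegral_congr fun w => ?_
      classical
      by_cases hw : (x, w) ∈ s
      · simp [Set.indicator, hw]
      · simp [Set.indicator, hw]
    rw [hLHS]
    refine lintegral_congr_ae ?_
    filter_upwards [hm_ne_top] with x hxtop
    show ∫⁻ w in Prod.mk x ⁻¹' s, r w ∂κb x = (m x * κc x (Prod.mk x ⁻¹' s))
    by_cases hx0 : m x = 0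
    · have hle0 : ∫⁻ w in Prod.mk x ⁻¹' s, r w ∂κb x ≤ m x :=
        setLIntegral_le_lintegral _ _
      rw [hx0] at hle0
      rw [hx0, zero_mul, le_zero_iff.mp hle0]
    · have hxS : x ∈ S := ⟨hx0, hxtop⟩
      rw [hκcdef, Kernel.piecewise_apply, if_pos hxS, hκ1_apply,
        withDensity_apply _ (measurable_prodMk_left hs),
        lintegral_const_mul _ hr, ← mul_assoc, ENNReal.mul_inv_cancel hx0 hxtop, one_mul]
  have huniq : ∀ᵐ x ∂θ'.fst, κc x = θ'.condKernel x :=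
    eq_condKernel_of_measure_eq_compProd κc hcomp
  -- the explicit representative of the TV distance
  set E : Set (β × 𝒲) := {q | 1 ≤ (m q.1)⁻¹ * r q.2} with hEdef
  have hE : MeasurableSet E :=
    measurableSet_le measurable_const ((hm_meas.comp measurable_fst).inv.mul
      (hr.comp measurable_snd))
  set G : β → ℝ := fun x =>
    (θ'.condKernel x (Prod.mk x ⁻¹' E)).toReal - (κb x (Prod.mk x ⁻¹' E)).toReal with hGdef
  have hG_meas : Measurable G := by
    refine Measurable.sub ?_ ?_
    · exact (Kernel.measurable_kernel_prodMk_left (κ := θ'.condKernel) hE).ennreal_toReal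
    · exact (Kernel.measurable_kernel_prodMk_left (κ := κb) hE).ennreal_toReal
  have hident : ∀ᵐ x ∂θ'.fst,
      θ'.condKernel x = (κb x).withDensity (fun w => (m x)⁻¹ * r w) := by
    filter_upwards [hm_ne_zero', hm_ne_top', huniq] with x h0 htop huq
    rw [← huq, hκcdef, Kernel.piecewise_apply]
    split_ifs with hxS
    · exact hκ1_apply x
    · exact absurd ⟨h0, htop⟩ hxS
  have hae_main : ∀ᵐ x ∂θ'.fst,
      tvDist (θ'.condKernel x) (κb x) = G x ∧ 0 ≤ G x := by
    filter_upwards [hident] with x hid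
    haveI : IsProbabilityMeasure ((κb x).withDensity (fun w => (m x)⁻¹ * r w)) := by
      rw [← hid]; infer_instance
    have hset : {w | 1 ≤ (m x)⁻¹ * r w} = Prod.mk x ⁻¹' E := rfl
    have heq : tvDist (θ'.condKernel x) (κb x) = G x := by
      rw [hid, tvDist_withDensity (κb x) _ (hr.const_mul (m x)⁻¹), hset, ← hid]
    exact ⟨heq, by rw [← heq]; exact tvDist_nonneg _ _⟩
  -- identify `condDistrib` with the conditional kernels of the joint laws
  have hκ'eq : condDistrib W X μ = θ'.condKernel := condDistrib_def W X μ
  have hκbeq : condDistrib W X μbar = κb := condDistrib_def W X μbar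
  have hae_ω : ∀ᵐ ω ∂μ, tvDist (condDistrib W X μ (X ω)) (condDistrib W X μbar (X ω))
      = G (X ω) := by
    rw [hκ'eq, hκbeq]
    have h1 : ∀ᵐ x ∂(μ.map X), tvDist (θ'.condKernel x) (κb x) = G x := by
      rw [← hfst']
      filter_upwards [hae_main] with x hx using hx.1
    exact ae_of_ae_map hX.aemeasurable h1
  have hGpos : 0 ≤ᵐ[θ'.fst] G := by filter_upwards [hae_main] with x hx using hx.2
  have hI1 : ∫ ω, tvDist (condDistrib W X μ (X ω)) (condDistrib W X μbar (X ω)) ∂μ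
      = ∫ x, G x ∂θ'.fst := by
    rw [integral_congr_ae hae_ω, hfst',
      integral_map hX.aemeasurable hG_meas.aestronglyMeasurable]
  have hI2 : ∫ x, G x ∂θ'.fst = (∫⁻ x, ENNReal.ofReal (G x) ∂θ'.fst).toReal :=
    integral_eq_lintegral_of_nonneg_ae hGpos hG_meas.aestronglyMeasurable
  -- transfer a.e. facts from `θ'.fst` to `θ.fst` on `{m ≠ 0}`
  have transfer : ∀ (p : β → Prop), (∀ᵐ x ∂θ'.fst, p x) → (∀ᵐ x ∂θ.fst, m x ≠ 0 → p x) := by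
    intro p hp
    set N : Set β := toMeasurable θ'.fst {x | ¬ p x} with hNdef
    have hNm : MeasurableSet N := measurableSet_toMeasurable _ _
    have hN0' : θ'.fst N = 0 := by
      rw [hNdef, measure_toMeasurable]; exact hp
    rw [hfst_wd, withDensity_apply _ hNm] at hN0'
    have hz : ∀ᵐ x ∂(θ.fst.restrict N), m x = 0 :=
      ((lintegral_eq_zero_iff hm_meas).mp hN0').mono fun x h => h
    have hz' := (ae_restrict_iff' hNm).mp hz
    filter_upwards [hz'] with x hx hm0
    by_contra hnp
    exact hm0 (hx (subset_toMeasurable _ _ hnp))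
  have hident_fst : ∀ᵐ x ∂θ.fst, m x ≠ 0 →
      θ'.condKernel x = (κb x).withDensity (fun w => (m x)⁻¹ * r w) :=
    transfer _ hident
  set bnd : β × 𝒲 → ℝ≥0∞ := fun q => (‖(m q.1).toReal - (r q.2).toReal‖₊ : ℝ≥0∞) with hbnd
  have hbnd_meas : Measurable bnd := by
    refine Measurable.coe_nnreal_ennreal (Measurable.nnnorm ?_)
    exact ((hm_meas.comp measurable_fst).ennreal_toReal).sub
      ((hr.comp measurable_snd).ennreal_toReal)
  have hbnd_eq : ∀ x w, bnd (x, w) = ENNReal.ofReal |(r w).toReal - (m x).toReal| := by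
    intro x w
    rw [hbnd]
    show (‖(m x).toReal - (r w).toReal‖₊ : ℝ≥0∞) = _
    rw [← enorm_eq_nnnorm, Real.enorm_eq_ofReal_abs, abs_sub_comm]
  have hkey : ∫⁻ x, ENNReal.ofReal (G x) ∂θ'.fst ≤ ∫⁻ ω, bnd (X ω, W ω) ∂μbar := by
    rw [hfst_wd, lintegral_withDensity_eq_lintegral_mul _ hm_meas hG_meas.ennreal_ofReal]
    have hptwise : ∀ᵐ x ∂θ.fst,
        m x * ENNReal.ofReal (G x) ≤ ∫⁻ w, bnd (x, w) ∂κb x := by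
      filter_upwards [hm_ne_top, hident_fst] with x htop hid
      by_cases h0 : m x = 0
      · rw [h0, zero_mul]; exact zero_le
      have hid' := hid h0
      have hAm : MeasurableSet (Prod.mk x ⁻¹' E) := measurable_prodMk_left hE
      have hrfin : ∀ᵐ w ∂κb x, r w < ∞ :=
        ae_lt_top hr (show ∫⁻ w, r w ∂κb x ≠ ∞ from htop)
      have hQA : θ'.condKernel x (Prod.mk x ⁻¹' E)
          = ∫⁻ w in Prod.mk x ⁻¹' E, (m x)⁻¹ * r w ∂κb x := by
        rw [hid', withDensity_apply _ hAm]
      have hPA_le : κb x (Prod.mk x ⁻¹' E) ≤ θ'.condKernel x (Prod.mk x ⁻¹' E) := by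
        rw [hQA]
        calc κb x (Prod.mk x ⁻¹' E) = ∫⁻ _ in Prod.mk x ⁻¹' E, 1 ∂κb x :=
          (setLIntegral_one _).symm
        _ ≤ _ := setLIntegral_mono (hr.const_mul _) fun w hw => hw
      have hofReal : ENNReal.ofReal (G x)
          = θ'.condKernel x (Prod.mk x ⁻¹' E) - κb x (Prod.mk x ⁻¹' E) := by
        rw [hGdef, ENNReal.ofReal_sub _ ENNReal.toReal_nonneg,
          ENNReal.ofReal_toReal (measure_ne_top _ _),
          ENNReal.ofReal_toReal (measure_ne_top _ _)]
      have hsplit : θ'.condKernel x (Prod.mk x ⁻¹' E)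
          = (∫⁻ w in Prod.mk x ⁻¹' E, ((m x)⁻¹ * r w - 1) ∂κb x)
            + κb x (Prod.mk x ⁻¹' E) := by
        rw [hQA]
        calc ∫⁻ w in Prod.mk x ⁻¹' E, (m x)⁻¹ * r w ∂κb x
            = ∫⁻ w in Prod.mk x ⁻¹' E, (((m x)⁻¹ * r w - 1) + 1) ∂κb x :=
              setLIntegral_congr_fun hAm
                (fun w hw => (tsub_add_cancel_of_le hw).symm)
        _ = (∫⁻ w in Prod.mk x ⁻¹' E, ((m x)⁻¹ * r w - 1) ∂κb x)
            + ∫⁻ _ in Prod.mk x ⁻¹' E, 1 ∂κb x := lintegral_add_right _ measurable_const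
        _ = _ := by rw [setLIntegral_one]
      have hdiff : θ'.condKernel x (Prod.mk x ⁻¹' E) - κb x (Prod.mk x ⁻¹' E)
          = ∫⁻ w in Prod.mk x ⁻¹' E, ((m x)⁻¹ * r w - 1) ∂κb x := by
        rw [hsplit, ENNReal.add_sub_cancel_right (measure_ne_top _ _)]
      rw [hofReal, hdiff, ← lintegral_const_mul _ (f := fun w => (m x)⁻¹ * r w - 1) ((hr.const_mul _).sub measurable_const)]
      refine le_trans (setLIntegral_le_lintegral _ _) (lintegral_mono_ae ?_)
      filter_upwards [hrfin] with w hw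
      have hmul : m x * ((m x)⁻¹ * r w - 1) = r w - m x := by
        rw [ENNReal.mul_sub (fun _ _ => htop), ← mul_assoc,
          ENNReal.mul_inv_cancel h0 htop, one_mul, mul_one]
      rw [hmul, hbnd_eq]
      exact ennreal_sub_le_ofReal_abs hw.ne htop
    calc ∫⁻ x, m x * ENNReal.ofReal (G x) ∂θ.fst
        ≤ ∫⁻ x, ∫⁻ w, bnd (x, w) ∂κb x ∂θ.fst := lintegral_mono_ae hptwise
    _ = ∫⁻ q, bnd q ∂(θ.fst ⊗ₘ κb) := (Measure.lintegral_compProd hbnd_meas).symm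
    _ = ∫⁻ q, bnd q ∂θ := by rw [hdis]
    _ = ∫⁻ ω, bnd (X ω, W ω) ∂μbar := lintegral_map hbnd_meas hpm
  -- identify the bound with the statement's right-hand side
  have hfin_ae : ∀ᵐ ω ∂μbar,
      (m (X ω)).toReal = ∫ w, (r w).toReal ∂(condDistrib W X μbar (X ω)) := by
    rw [hκbeq]
    have h1 : ∀ᵐ x ∂(μbar.map X), (m x).toReal = ∫ w, (r w).toReal ∂κb x := by
      rw [← hfst]
      filter_upwards [hm_ne_top] with x htop
      rw [integral_toReal hr.aemeasurable
        (ae_lt_top hr (show ∫⁻ w, r w ∂κb x ≠ ∞ from htop))]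
    exact ae_of_ae_map hX.aemeasurable h1
  have hRHS_eq : ∫⁻ ω, bnd (X ω, W ω) ∂μbar
      = ∫⁻ ω, (‖(∫ w, (r w).toReal ∂(condDistrib W X μbar (X ω)))
          - (r (W ω)).toReal‖₊ : ℝ≥0∞) ∂μbar := by
    refine lintegral_congr_ae ?_
    filter_upwards [hfin_ae] with ω hω
    rw [hbnd]
    show (‖(m (X ω)).toReal - (r (W ω)).toReal‖₊ : ℝ≥0∞) = _
    rw [hω]
  have hfin : ∫⁻ ω, bnd (X ω, W ω) ∂μbar ≠ ∞ := by
    have hb : ∀ ω, bnd (X ω, W ω) ≤ m (X ω) + r (W ω) := by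
      intro ω
      rw [hbnd]
      show (‖(m (X ω)).toReal - (r (W ω)).toReal‖₊ : ℝ≥0∞) ≤ _
      rw [← enorm_eq_nnnorm, Real.enorm_eq_ofReal_abs]
      calc ENNReal.ofReal |(m (X ω)).toReal - (r (W ω)).toReal|
          ≤ ENNReal.ofReal ((m (X ω)).toReal + (r (W ω)).toReal) := by
            refine ENNReal.ofReal_le_ofReal ?_
            have := abs_sub (m (X ω)).toReal (r (W ω)).toReal
            calc |(m (X ω)).toReal - (r (W ω)).toReal|
                ≤ |(m (X ω)).toReal| + |(r (W ω)).toReal| := abs_sub _ _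
            _ = (m (X ω)).toReal + (r (W ω)).toReal := by
                rw [abs_of_nonneg ENNReal.toReal_nonneg, abs_of_nonneg ENNReal.toReal_nonneg]
      _ = ENNReal.ofReal (m (X ω)).toReal + ENNReal.ofReal (r (W ω)).toReal :=
          ENNReal.ofReal_add ENNReal.toReal_nonneg ENNReal.toReal_nonneg
      _ ≤ m (X ω) + r (W ω) :=
          add_le_add ENNReal.ofReal_toReal_le ENNReal.ofReal_toReal_le
    have h2' : ∫⁻ ω, bnd (X ω, W ω) ∂μbar ≤ 2 := by
      calc ∫⁻ ω, bnd (X ω, W ω) ∂μbar ≤ ∫⁻ ω, (m (X ω) + r (W ω)) ∂μbar :=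
        lintegral_mono hb
      _ = (∫⁻ ω, m (X ω) ∂μbar) + ∫⁻ ω, r (W ω) ∂μbar :=
        lintegral_add_left (hm_meas.comp hX) _
      _ = 1 + 1 := by
          rw [hrint, ← lintegral_map hm_meas hX, ← hfst, hm_int]
      _ = 2 := one_add_one_eq_two
    exact (h2'.trans_lt (by norm_num)).ne
  rw [hI1, hI2]
  refine ENNReal.toReal_mono ?_ (hkey.trans (le_of_eq hRHS_eq))
  rw [← hRHS_eq]
  exact hfin

/-- Theorem 1: if the scheme is reliable (`W` is `ℙ̄`-a.s. `ℱ^Y_{1:∞}`-measurable), then for any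
prior `ν ≪ ν̄`, the `ν`-expected total variation distance between the posteriors of `W` given
`Y_{1:n}` under priors `ν` and `ν̄` tends to `0`. -/
theorem reliable_implies_posterior_merging
    {Ω 𝒲 𝒴 : Type*} {mΩ : MeasurableSpace Ω} [MeasurableSpace 𝒲] [StandardBorelSpace 𝒲]
    [Nonempty 𝒲] [MeasurableSpace 𝒴]
    (μbar : Measure Ω) [IsProbabilityMeasure μbar]
    (W : Ω → 𝒲) (hW : Measurable W)
    (Y : ℕ → Ω → 𝒴) (hY : ∀ n, Measurable (Y n))
    -- reliability: `W` is `μbar`-a.s. measurable with respect to `ℱ^Y_{1:∞} = ⨆ n, σ(Y n)`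
    (hreliable : ∃ W' : Ω → 𝒲,
      Measurable[⨆ n, MeasurableSpace.comap (Y n) inferInstance] W' ∧ W =ᵐ[μbar] W')
    (ν νbar : Measure 𝒲) [IsProbabilityMeasure ν] [IsProbabilityMeasure νbar]
    (hac : ν ≪ νbar) (hprior : Measure.map W μbar = νbar)
    (μ : Measure Ω) [IsProbabilityMeasure μ]
    (hμ : μ = μbar.withDensity (fun ω => ν.rnDeriv νbar (W ω))) :
    Tendsto (fun n =>
      ∫ ω, tvDist
        ((condDistrib W (fun ω' (i : Fin n) => Y i ω') μ) (fun i : Fin n => Y i ω))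
        ((condDistrib W (fun ω' (i : Fin n) => Y i ω') μbar) (fun i : Fin n => Y i ω)) ∂μ)
      atTop (nhds 0) := by
  obtain ⟨W', hW'meas, hWW'⟩ := hreliable
  set r : 𝒲 → ℝ≥0∞ := ν.rnDeriv νbar with hrdef
  have hrmeas : Measurable r := Measure.measurable_rnDeriv ν νbar
  have hrint : ∫⁻ ω, r (W ω) ∂μbar = 1 := by
    rw [← lintegral_map hrmeas hW, hprior, Measure.lintegral_rnDeriv hac, measure_univ]
  have hYvec : ∀ n : ℕ, Measurable (fun ω (i : Fin n) => Y i ω) := fun n =>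
    measurable_pi_lambda _ fun i => hY i
  have hcomap : ∀ n : ℕ, MeasurableSpace.comap (fun ω (i : Fin n) => Y i ω) inferInstance
      = ⨆ i : Fin n, MeasurableSpace.comap (Y (i : ℕ)) inferInstance := by
    intro n
    have hpi : (inferInstance : MeasurableSpace (Fin n → 𝒴))
        = ⨆ i : Fin n, MeasurableSpace.comap (fun f : Fin n → 𝒴 => f i) inferInstance := rfl
    rw [hpi, MeasurableSpace.comap_iSup]
    refine iSup_congr fun i => ?_
    rw [MeasurableSpace.comap_comp]
    rfl
  have hmono : Monotone (fun n : ℕ =>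
      MeasurableSpace.comap (fun ω (i : Fin n) => Y i ω) inferInstance) := by
    refine monotone_nat_of_le_succ fun n => ?_
    rw [hcomap n, hcomap (n+1)]
    refine iSup_le fun i => ?_
    have heq : MeasurableSpace.comap (Y (i : ℕ)) inferInstance
        = MeasurableSpace.comap (Y ((i.castSucc : Fin (n+1)) : ℕ)) inferInstance := by
      rw [Fin.coe_castSucc]
    rw [heq]
    exact le_iSup (fun j : Fin (n+1) =>
      MeasurableSpace.comap (Y (j : ℕ)) inferInstance) i.castSucc
  set ℱ : Filtration ℕ mΩ :=
    { seq := fun n => MeasurableSpace.comap (fun ω (i : Fin n) => Y i ω) inferInstance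
      mono' := hmono
      le' := fun n => (hYvec n).comap_le } with hℱdef
  have hsup : (⨆ n, ℱ n) = ⨆ n : ℕ, MeasurableSpace.comap (Y n) inferInstance := by
    refine le_antisymm ?_ ?_
    · refine iSup_le fun n => ?_
      show MeasurableSpace.comap (fun ω (i : Fin n) => Y i ω) inferInstance ≤ _
      rw [hcomap n]
      exact iSup_le fun i =>
        le_iSup (fun k : ℕ => MeasurableSpace.comap (Y k) inferInstance) (i : ℕ)
    · refine iSup_le fun k => ?_
      refine le_iSup_of_le (k+1) ?_
      show _ ≤ MeasurableSpace.comap (fun ω (i : Fin (k+1)) => Y i ω) inferInstance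
      rw [hcomap (k+1)]
      have heq : MeasurableSpace.comap (Y k) inferInstance
          = MeasurableSpace.comap (Y ((Fin.last k) : ℕ)) inferInstance := by
        rw [Fin.val_last]
      rw [heq]
      exact le_iSup (fun i : Fin (k+1) =>
        MeasurableSpace.comap (Y (i : ℕ)) inferInstance) (Fin.last k)
  set g : Ω → ℝ := fun ω => (r (W ω)).toReal with hgdef
  have hgint : Integrable g μbar :=
    integrable_toReal_of_lintegral_ne_top (hrmeas.comp hW).aemeasurable
      (by rw [hrint]; exact ENNReal.one_ne_top)
  set g' : Ω → ℝ := fun ω => (r (W' ω)).toReal with hg'def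
  have hgg' : g =ᵐ[μbar] g' := by
    filter_upwards [hWW'] with ω h
    rw [hgdef, hg'def]
    simp only [h]
  have hg'meas : StronglyMeasurable[⨆ n, ℱ n] g' := by
    have hme : Measurable[⨆ n : ℕ, MeasurableSpace.comap (Y n) inferInstance] g' :=
      ENNReal.measurable_toReal.comp (hrmeas.comp hW'meas)
    rw [hsup]
    exact hme.stronglyMeasurable
  have hg'int : Integrable g' μbar := hgint.congr hgg'
  have hlevy : Tendsto (fun n => eLpNorm (μbar[g'|ℱ n] - g') 1 μbar) atTop (nhds 0) :=
    hg'int.tendsto_eLpNorm_condExp hg'meas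
  -- the per-n bound
  have hbound : ∀ n, (∫ ω, tvDist
        ((condDistrib W (fun ω' (i : Fin n) => Y i ω') μ) (fun i : Fin n => Y i ω))
        ((condDistrib W (fun ω' (i : Fin n) => Y i ω') μbar) (fun i : Fin n => Y i ω)) ∂μ)
      ≤ (eLpNorm (μbar[g'|ℱ n] - g') 1 μbar).toReal := by
    intro n
    have hstep := step_bound μbar W hW (fun ω (i : Fin n) => Y i ω) (hYvec n)
      r hrmeas hrint μ hμ
    refine hstep.trans (le_of_eq ?_)
    congr 1
    have hcond : μbar[g|ℱ n] =ᵐ[μbar] fun ω => ∫ w, (r w).toReal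
        ∂condDistrib W (fun ω' (i : Fin n) => Y i ω') μbar (fun i : Fin n => Y i ω) :=
      condExp_ae_eq_integral_condDistrib (hYvec n) hW.aemeasurable
        (ENNReal.measurable_toReal.comp hrmeas).stronglyMeasurable hgint
    have hsub : (fun ω => (∫ w, (r w).toReal
          ∂condDistrib W (fun ω' (i : Fin n) => Y i ω') μbar (fun i : Fin n => Y i ω))
            - g ω) =ᵐ[μbar] (μbar[g'|ℱ n] - g') := by
      have hc' : μbar[g|ℱ n] =ᵐ[μbar] μbar[g'|ℱ n] := condExp_congr_ae hgg'
      filter_upwards [hcond, hc', hgg'] with ω h1 h2 h3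
      simp only [Pi.sub_apply]
      rw [← h1, h2, h3]
    rw [eLpNorm_one_eq_lintegral_enorm]
    refine lintegral_congr_ae ?_
    filter_upwards [hsub] with ω h
    rw [h]; rfl
  have hnonneg : ∀ n, 0 ≤ (∫ ω, tvDist
        ((condDistrib W (fun ω' (i : Fin n) => Y i ω') μ) (fun i : Fin n => Y i ω))
        ((condDistrib W (fun ω' (i : Fin n) => Y i ω') μbar) (fun i : Fin n => Y i ω)) ∂μ) :=
    fun n => integral_nonneg fun ω => tvDist_nonneg _ _
  have htends : Tendsto (fun n => (eLpNorm (μbar[g'|ℱ n] - g') 1 μbar).toReal)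
      atTop (nhds 0) := by
    have := (ENNReal.tendsto_toReal ENNReal.zero_ne_top).comp hlevy
    simpa [Function.comp_def] using this
  exact squeeze_zero hnonneg hbound htends
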